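/- Pointwise operator bound from a Harnack inequality (displayed estimate in the proof of Theorem 2.3(2)): Let (E, d) be a metric space with its Borel σ-algebra, let κ be a Markov kernel from E to E, and let μ be a probability measure on E that is invariant for κ, i.e. ∫_E κ(x)(B) dμ(x) = μ(B) for every Borel set B. Suppose there is a constant c > 0 such that the Harnack inequality (∫_E f dκ(η))² ≤ (∫_E f² dκ(ξ)) · e^{c·d(ξ,η)²} holds for all bounded measurable f : E → [0,∞) and all ξ, η ∈ E. Then for every ξ ∈ E and every bounded measurable f : E → [0,∞) with ∫_E f² dμ ≤ 1, one has (∫_E f dκ(ξ))² ≤ (∫_E e^{−c·d(ξ,η)²} dμ(η))^{-1}, where the integral on the right-hand side is strictly positive. -/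

import Mathlib

open MeasureTheory ProbabilityTheory
open scoped ENNReal

/-- **Pointwise operator bound from a Harnack inequality** (displayed estimate in
the proof of Theorem 2.3(2) of the paper). If a Markov kernel `κ` with invariant
probability measure `μ` satisfies the Harnack inequality, then for every `ξ` the
integral `∫ e^{-c d(ξ,·)²} dμ` is positive and, for every bounded measurable
`f ≥ 0` with `∫ f² dμ ≤ 1`, `(∫ f dκ(ξ))² ≤ (∫ e^{-c d(ξ,·)²} dμ)⁻¹`. -/
theorem harnack_pointwise_operator_bound
    {E : Type*} [MetricSpace E] [MeasurableSpace E] [BorelSpace E]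
    (κ : Kernel E E) [IsMarkovKernel κ]
    (μ : Measure E) [IsProbabilityMeasure μ]
    (hinv : ∀ B : Set E, MeasurableSet B → ∫⁻ x, κ x B ∂μ = μ B)
    (c : ℝ) (hc : 0 < c)
    (harnack : ∀ f : E → ℝ, Measurable f → (∀ x, 0 ≤ f x) → (∃ M : ℝ, ∀ x, f x ≤ M) →
      ∀ ξ η : E,
        (∫ x, f x ∂(κ η)) ^ 2 ≤
          (∫ x, f x ^ 2 ∂(κ ξ)) * Real.exp (c * dist ξ η ^ 2)) :
    ∀ ξ : E,
      0 < ∫ η, Real.exp (-(c * dist ξ η ^ 2)) ∂μ ∧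
      ∀ f : E → ℝ, Measurable f → (∀ x, 0 ≤ f x) → (∃ M : ℝ, ∀ x, f x ≤ M) →
        (∫ x, f x ^ 2 ∂μ) ≤ 1 →
        (∫ x, f x ∂(κ ξ)) ^ 2 ≤ (∫ η, Real.exp (-(c * dist ξ η ^ 2)) ∂μ)⁻¹ := by
  intro ξ
  -- the weight function
  set w : E → ℝ := fun η => Real.exp (-(c * dist ξ η ^ 2)) with hw
  have hwcont : Continuous w := by
    apply Real.continuous_exp.comp
    exact (continuous_const.mul ((continuous_const.dist continuous_id).pow 2)).neg
  have hwpos : ∀ η, 0 < w η := fun η => Real.exp_pos _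
  have hwle : ∀ η, w η ≤ 1 := by
    intro η
    apply Real.exp_le_one_iff.mpr
    simp only [neg_nonpos]
    positivity
  have hwint : Integrable w μ := by
    refine (integrable_const (1 : ℝ)).mono' hwcont.aestronglyMeasurable ?_
    exact Filter.Eventually.of_forall fun η =>
      by rw [Real.norm_eq_abs, abs_of_pos (hwpos η)]; exact hwle η
  have hIpos : 0 < ∫ η, w η ∂μ := by
    rw [integral_pos_iff_support_of_nonneg_ae
      (Filter.Eventually.of_forall fun η => (hwpos η).le) hwint]
    have : Function.support w = Set.univ := by
      ext η; simp [Function.support, (hwpos η).ne']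
    rw [this]
    simp
  refine ⟨hIpos, ?_⟩
  intro f hf hnn ⟨M, hM⟩ hL2
  have hM0 : 0 ≤ M := le_trans (hnn ξ) (hM ξ)
  set A : ℝ := ∫ x, f x ∂(κ ξ) with hA
  -- invariance: μ.bind κ = μ
  have hbind : μ.bind (fun x => κ x) = μ := by
    ext B hB
    rw [Measure.bind_apply hB (κ.measurable.aemeasurable)]
    exact hinv B hB
  -- the key pointwise estimate
  have hmeas2 : Measurable fun x => f x ^ 2 := hf.pow_const 2
  have key : ∀ η, A ^ 2 * w η ≤ ∫ x, f x ^ 2 ∂(κ η) := by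
    intro η
    have h := harnack f hf hnn ⟨M, hM⟩ η ξ
    have hd : dist η ξ = dist ξ η := dist_comm η ξ
    rw [hd] at h
    have hepos : 0 < Real.exp (c * dist ξ η ^ 2) := Real.exp_pos _
    have : A ^ 2 * w η ≤ ((∫ x, f x ^ 2 ∂(κ η)) * Real.exp (c * dist ξ η ^ 2)) * w η :=
      mul_le_mul_of_nonneg_right h (hwpos η).le
    refine this.trans_eq ?_
    rw [hw]
    simp only [mul_assoc, ← Real.exp_add]
    simp
  -- lintegral version of f^2
  set F : E → ℝ≥0∞ := fun x => ENNReal.ofReal (f x ^ 2) with hF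
  have hFmeas : Measurable F := ENNReal.measurable_ofReal.comp hmeas2
  have hFbd : ∀ x, F x ≤ ENNReal.ofReal (M ^ 2) := by
    intro x
    exact ENNReal.ofReal_le_ofReal (pow_le_pow_left₀ (hnn x) (hM x) 2)
  -- ∫ f² dκη = (∫⁻ F dκη).toReal  and  ∫⁻ F dκη ≤ ofReal M²
  have hker_lt : ∀ η : E, ∫⁻ x, F x ∂(κ η) ≤ ENNReal.ofReal (M ^ 2) := by
    intro η
    calc ∫⁻ x, F x ∂(κ η) ≤ ∫⁻ _, ENNReal.ofReal (M ^ 2) ∂(κ η) :=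
          lintegral_mono hFbd
      _ = ENNReal.ofReal (M ^ 2) := by simp
  have hker_eq : ∀ η : E, ∫ x, f x ^ 2 ∂(κ η) = (∫⁻ x, F x ∂(κ η)).toReal := by
    intro η
    rw [integral_eq_lintegral_of_nonneg_ae
      (Filter.Eventually.of_forall fun x => sq_nonneg (f x))
      hmeas2.aestronglyMeasurable]
  -- ∫⁻ F dμ ≤ 1
  have hFμ_lt : ∫⁻ x, F x ∂μ ≤ ENNReal.ofReal (M ^ 2) := by
    calc ∫⁻ x, F x ∂μ ≤ ∫⁻ _, ENNReal.ofReal (M ^ 2) ∂μ := lintegral_mono hFbd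
      _ = ENNReal.ofReal (M ^ 2) := by simp
  have hFμ1 : ∫⁻ x, F x ∂μ ≤ 1 := by
    have heq : ∫ x, f x ^ 2 ∂μ = (∫⁻ x, F x ∂μ).toReal := by
      rw [integral_eq_lintegral_of_nonneg_ae
        (Filter.Eventually.of_forall fun x => sq_nonneg (f x))
        hmeas2.aestronglyMeasurable]
    rw [heq] at hL2
    have hne : ∫⁻ x, F x ∂μ ≠ ⊤ := (hFμ_lt.trans_lt ENNReal.ofReal_lt_top).ne
    rw [← ENNReal.ofReal_one, ← ENNReal.ofReal_toReal hne]
    exact ENNReal.ofReal_le_ofReal hL2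
  -- main estimate : A² * I ≤ 1
  have hmain : A ^ 2 * ∫ η, w η ∂μ ≤ 1 := by
    have h1 : A ^ 2 * ∫ η, w η ∂μ = ∫ η, A ^ 2 * w η ∂μ := (integral_const_mul _ _).symm
    rw [h1]
    have h2 : ∫ η, A ^ 2 * w η ∂μ
        = (∫⁻ η, ENNReal.ofReal (A ^ 2 * w η) ∂μ).toReal := by
      rw [integral_eq_lintegral_of_nonneg_ae
        (Filter.Eventually.of_forall fun η => mul_nonneg (sq_nonneg A) (hwpos η).le)
        (measurable_const.mul (hwcont.measurable)).aestronglyMeasurable]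
    rw [h2]
    have h3 : ∫⁻ η, ENNReal.ofReal (A ^ 2 * w η) ∂μ ≤ ∫⁻ η, ∫⁻ x, F x ∂(κ η) ∂μ := by
      apply lintegral_mono
      intro η
      have := key η
      rw [hker_eq η] at this
      calc ENNReal.ofReal (A ^ 2 * w η) ≤ ENNReal.ofReal (∫⁻ x, F x ∂(κ η)).toReal :=
            ENNReal.ofReal_le_ofReal this
        _ = ∫⁻ x, F x ∂(κ η) :=
            ENNReal.ofReal_toReal ((hker_lt η).trans_lt ENNReal.ofReal_lt_top).ne
    have h4 : ∫⁻ η, ∫⁻ x, F x ∂(κ η) ∂μ = ∫⁻ x, F x ∂μ := by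
      rw [← Measure.lintegral_bind (κ.measurable.aemeasurable) hFmeas.aemeasurable, hbind]
    rw [h4] at h3
    calc (∫⁻ η, ENNReal.ofReal (A ^ 2 * w η) ∂μ).toReal
        ≤ (∫⁻ x, F x ∂μ).toReal := ENNReal.toReal_mono
          (hFμ_lt.trans_lt ENNReal.ofReal_lt_top).ne h3
      _ ≤ 1 := by
          have := ENNReal.toReal_mono (by simp) hFμ1
          simpa using this
  -- conclude
  have : A ^ 2 ≤ 1 / ∫ η, w η ∂μ := (le_div_iff₀ hIpos).mpr hmain
  simpa [one_div] using this
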